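/- Let τ₁, ..., τₙ be i.i.d. nonnegative random variables with E[e^{-ατ₁}] = exp(μ'A/(2σ'²) - (A/(2σ'))√(μ'²/σ'² + 2α)) for all α > 0, where σ', μ', A > 0. Then P(τ₁ + ... + τₙ < nA/(4μ')) ≤ exp(-nAμ'/(8σ'²)). -/

import Mathlib

open MeasureTheory ProbabilityTheory
open scoped ENNReal NNReal

/-- Let `τ₁, …, τₙ` be i.i.d. nonnegative random variables with
Laplace transform `E[e^{-ατ₁}] = exp(μ'A/(2σ'²) - (A/(2σ'))√(μ'²/σ'² + 2α))` for all
`α > 0`, where `σ', μ', A > 0`.  Then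
`P(τ₁ + ⋯ + τₙ < nA/(4μ')) ≤ exp(-nAμ'/(8σ'²))`. -/
theorem sum_hitting_times_lower_tail {Ω : Type*} [MeasurableSpace Ω]
    (P : Measure Ω) [IsProbabilityMeasure P]
    (σ' μ' A : ℝ) (hσ : 0 < σ') (hμ : 0 < μ') (hA : 0 < A)
    (n : ℕ) (τ : Fin n → Ω → ℝ)
    (hmeas : ∀ k, Measurable (τ k))
    (hnonneg : ∀ k ω, 0 ≤ τ k ω)
    (hindep : iIndepFun τ P)
    (hident : ∀ k l, Measure.map (τ k) P = Measure.map (τ l) P)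
    (hlaplace : ∀ k, ∀ α : ℝ, 0 < α →
      ∫ ω, Real.exp (-α * τ k ω) ∂P =
        Real.exp (μ' * A / (2 * σ' ^ 2) -
          A / (2 * σ') * Real.sqrt (μ' ^ 2 / σ' ^ 2 + 2 * α))) :
    P {ω | ∑ k, τ k ω < n * A / (4 * μ')} ≤
      ENNReal.ofReal (Real.exp (-(n * A * μ') / (8 * σ' ^ 2))) := by
  set α : ℝ := 3 * μ' ^ 2 / (2 * σ' ^ 2) with hα_def
  have hαpos : 0 < α := by positivity
  set t : ℝ := -α with ht_def
  have ht : t ≤ 0 := by simp only [ht_def]; linarith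
  set ε : ℝ := n * A / (4 * μ') with hε_def
  -- integrability of the exponentials
  have hint : ∀ k : Fin n, Integrable (fun ω => Real.exp (t * τ k ω)) P := by
    intro k
    refine (integrable_const (1 : ℝ)).mono'
      (((hmeas k).const_mul t).exp.aestronglyMeasurable) ?_
    filter_upwards with ω
    rw [Real.norm_eq_abs, abs_of_pos (Real.exp_pos _)]
    apply Real.exp_le_one_iff.mpr
    have := hnonneg k ω
    have : t * τ k ω ≤ 0 := mul_nonpos_of_nonpos_of_nonneg ht this
    linarith
  have hXeq : (∑ k, τ k) = fun ω => ∑ k, τ k ω := by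
    ext ω; exact Finset.sum_apply ω Finset.univ τ
  have hXint : Integrable (fun ω => Real.exp (t * (∑ k, τ k) ω)) P := by
    rw [hXeq]
    refine (integrable_const (1 : ℝ)).mono'
      ((Finset.measurable_sum Finset.univ fun k _ => hmeas k).const_mul t).exp.aestronglyMeasurable ?_
    filter_upwards with ω
    rw [Real.norm_eq_abs, abs_of_pos (Real.exp_pos _)]
    apply Real.exp_le_one_iff.mpr
    have hs : 0 ≤ ∑ k, τ k ω := Finset.sum_nonneg fun k _ => hnonneg k ω
    exact mul_nonpos_of_nonpos_of_nonneg ht hs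
  -- value of each mgf
  have hsqrt : Real.sqrt (μ' ^ 2 / σ' ^ 2 + 2 * α) = 2 * μ' / σ' := by
    have h1 : μ' ^ 2 / σ' ^ 2 + 2 * α = (2 * μ' / σ') ^ 2 := by
      rw [hα_def]; field_simp; ring
    rw [h1, Real.sqrt_sq (by positivity)]
  have hmgf : ∀ k : Fin n, mgf (τ k) P t = Real.exp (-(μ' * A) / (2 * σ' ^ 2)) := by
    intro k
    rw [mgf]
    have := hlaplace k α hαpos
    simp only [ht_def]
    rw [show (fun ω => Real.exp (-α * τ k ω)) = fun ω => Real.exp (-α * τ k ω) from rfl] at this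
    rw [this, hsqrt]
    congr 1
    field_simp
    ring
  -- Chernoff bound
  have hchern := measure_le_le_exp_mul_mgf (μ := P) (X := ∑ k, τ k) ε ht hXint
  rw [hindep.mgf_sum hmeas] at hchern
  have hprod : ∏ k : Fin n, mgf (τ k) P t =
      Real.exp (n * (-(μ' * A) / (2 * σ' ^ 2))) := by
    rw [Finset.prod_congr rfl fun k _ => hmgf k, Finset.prod_const, Finset.card_univ,
      Fintype.card_fin, ← Real.exp_nat_mul]
  rw [hprod, ← Real.exp_add] at hchern
  have hexp_eq : -t * ε + n * (-(μ' * A) / (2 * σ' ^ 2)) = -(n * A * μ') / (8 * σ' ^ 2) := by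
    rw [ht_def, hα_def, hε_def]
    field_simp
    ring
  rw [hexp_eq] at hchern
  rw [hXeq] at hchern
  have hsub : {ω | ∑ k, τ k ω < n * A / (4 * μ')} ⊆ {ω | (fun ω => ∑ k, τ k ω) ω ≤ ε} := by
    intro ω hω
    simp only [Set.mem_setOf_eq] at *
    exact le_of_lt hω
  refine le_trans (measure_mono hsub) ?_
  rw [ENNReal.le_ofReal_iff_toReal_le (measure_ne_top _ _) (Real.exp_pos _).le]
  exact hchern
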